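/- arXiv:2201.08481 — 3 statements merged into one kernel-verified Lean document; each statement's English description precedes it below -/
import Mathlib

section
/- Let V ∈ R^{d×n} with columns v_1,...,v_n, let nsm(V)_{ij} = exp(v_i·v_j)/Σ_k exp(v_i·v_k), and suppose nsm(V)_{ij} ≥ ε for some 0 < ε < 1. Then ‖v_i‖·‖v_j‖ ≥ ln ε + ‖v_i‖², and consequently if ‖v_i‖ ≥ ‖v_j‖ and ‖v_i‖ > 0, then ‖v_i‖ − ‖v_j‖ ≤ ln(1/ε)/‖v_i‖. -/
open Finset
set_option maxHeartbeats 1000000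

/-- The normalized softmax matrix of a collection of embedding vectors. -/
noncomputable def nsm {d n : ℕ} (v : Fin n → EuclideanSpace ℝ (Fin d)) (i j : Fin n) : ℝ :=
  Real.exp (inner ℝ (v i) (v j) : ℝ) / ∑ k, Real.exp (inner ℝ (v i) (v k) : ℝ)

theorem nsm_large_entry_length_bound
    (d n : ℕ) (v : Fin n → EuclideanSpace ℝ (Fin d)) (ε : ℝ)
    (hε : 0 < ε) (hε1 : ε < 1) (i j : Fin n) (hij : ε ≤ nsm v i j) :
    Real.log ε + ‖v i‖ ^ 2 ≤ ‖v i‖ * ‖v j‖ ∧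
      (‖v j‖ ≤ ‖v i‖ → 0 < ‖v i‖ → ‖v i‖ - ‖v j‖ ≤ Real.log (1 / ε) / ‖v i‖) := by
  have hS : (0:ℝ) < ∑ k, Real.exp (inner ℝ (v i) (v k) : ℝ) :=
    Finset.sum_pos (fun k _ => Real.exp_pos _) ⟨i, Finset.mem_univ i⟩
  have h1 : ε * ∑ k, Real.exp (inner ℝ (v i) (v k) : ℝ)
      ≤ Real.exp (inner ℝ (v i) (v j) : ℝ) := by
    rw [nsm, le_div_iff₀ hS] at hij
    linarith [hij]
  have h2 : Real.exp (inner ℝ (v i) (v i) : ℝ)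
      ≤ ∑ k, Real.exp (inner ℝ (v i) (v k) : ℝ) :=
    Finset.single_le_sum (f := fun k => Real.exp (inner ℝ (v i) (v k) : ℝ)) (fun k _ => le_of_lt (Real.exp_pos _)) (Finset.mem_univ i)
  have h3 : ε * Real.exp (inner ℝ (v i) (v i) : ℝ)
      ≤ Real.exp (inner ℝ (v i) (v j) : ℝ) := by
    calc ε * Real.exp (inner ℝ (v i) (v i) : ℝ)
        ≤ ε * ∑ k, Real.exp (inner ℝ (v i) (v k) : ℝ) := by
          apply mul_le_mul_of_nonneg_left h2 hε.le
      _ ≤ _ := h1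
  have h4 : Real.log ε + (inner ℝ (v i) (v i) : ℝ) ≤ (inner ℝ (v i) (v j) : ℝ) := by
    have := Real.log_le_log (by positivity) h3
    rwa [Real.log_mul hε.ne' (Real.exp_pos _).ne', Real.log_exp, Real.log_exp] at this
  have hcs : (inner ℝ (v i) (v j) : ℝ) ≤ ‖v i‖ * ‖v j‖ := real_inner_le_norm _ _
  have hii : (inner ℝ (v i) (v i) : ℝ) = ‖v i‖ ^ 2 := real_inner_self_eq_norm_sq _
  have hmain : Real.log ε + ‖v i‖ ^ 2 ≤ ‖v i‖ * ‖v j‖ := by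
    rw [hii] at h4; linarith
  refine ⟨hmain, fun _ hi => ?_⟩
  rw [le_div_iff₀ hi, Real.log_div one_ne_zero hε.ne', Real.log_one]
  have hring : (‖v i‖ - ‖v j‖) * ‖v i‖ = ‖v i‖ ^ 2 - ‖v i‖ * ‖v j‖ := by ring
  linarith
end

section
/- Let b ≤ n be natural numbers with b dividing n. Suppose v_1,...,v_n ∈ R^d are such that vertices are partitioned into n/b blocks of size b, all vertices in a block share the same vector, each vector has ‖v‖² = 4 ln n, and for any two vertices i, j in distinct blocks v_i·v_j ≤ ln n. Then for every pair i, j in the same block, nsm(V)_{ij} ≥ n⁴/(b n⁴ + n²) ≥ 1/(2b) (assuming n ≥ 2 and b ≥ 1). -/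
open Finset

/-- Deterministic core of Theorem 2.2: block-constant long vectors give softmax
community structure. -/
theorem softmax_block_structure
    (d n b : ℕ) (hn : 2 ≤ n) (hb : 1 ≤ b) (hdvd : b ∣ n)
    (v : Fin n → EuclideanSpace ℝ (Fin d)) (blk : Fin n → ℕ)
    (hsize : ∀ i : Fin n, (Finset.univ.filter (fun j : Fin n => blk j = blk i)).card = b)
    (hsame : ∀ i j : Fin n, blk i = blk j → v i = v j)
    (hlen : ∀ i : Fin n, ‖v i‖ ^ 2 = 4 * Real.log n)
    (hcross : ∀ i j : Fin n, blk i ≠ blk j → (inner ℝ (v i) (v j) : ℝ) ≤ Real.log n) :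
    ∀ i j : Fin n, blk i = blk j →
      ((n : ℝ) ^ 4 / (b * n ^ 4 + n ^ 2) ≤ nsm v i j ∧
        1 / (2 * b) ≤ (n : ℝ) ^ 4 / (b * n ^ 4 + n ^ 2)) := by
  intro i j hij
  have hn0 : (0:ℝ) < n := by positivity
  have hn1 : (1:ℝ) ≤ n := by exact_mod_cast Nat.one_le_of_lt hn
  have hb0 : (0:ℝ) < b := by exact_mod_cast hb
  have hexp4 : Real.exp (4 * Real.log n) = (n:ℝ) ^ 4 := by
    rw [show (4:ℝ) * Real.log n = (4:ℕ) * Real.log n by norm_num,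
      Real.exp_nat_mul, Real.exp_log hn0]
  have hexp1 : Real.exp (Real.log n) = (n:ℝ) := Real.exp_log hn0
  -- numerator
  have hnum : Real.exp ((inner ℝ (v i) (v j) : ℝ)) = (n:ℝ) ^ 4 := by
    rw [hsame i j hij, real_inner_self_eq_norm_sq, hlen j, hexp4]
  -- denominator bound
  set S := ∑ k, Real.exp ((inner ℝ (v i) (v k) : ℝ)) with hS
  have hSpos : 0 < S := Finset.sum_pos (fun k _ => Real.exp_pos _) ⟨i, Finset.mem_univ i⟩
  have hSle : S ≤ (b:ℝ) * n ^ 4 + n ^ 2 := by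
    have hsplit : S = (∑ k ∈ Finset.univ.filter (fun k : Fin n => blk k = blk i),
        Real.exp ((inner ℝ (v i) (v k) : ℝ))) +
        ∑ k ∈ Finset.univ.filter (fun k : Fin n => ¬ blk k = blk i),
        Real.exp ((inner ℝ (v i) (v k) : ℝ)) := by
      rw [hS, ← Finset.sum_filter_add_sum_filter_not Finset.univ
        (fun k : Fin n => blk k = blk i)]
    rw [hsplit]
    have h1 : (∑ k ∈ Finset.univ.filter (fun k : Fin n => blk k = blk i),
        Real.exp ((inner ℝ (v i) (v k) : ℝ))) = (b:ℝ) * n ^ 4 := by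
      have : ∀ k ∈ Finset.univ.filter (fun k : Fin n => blk k = blk i),
          Real.exp ((inner ℝ (v i) (v k) : ℝ)) = (n:ℝ) ^ 4 := by
        intro k hk
        simp only [Finset.mem_filter] at hk
        rw [hsame i k hk.2.symm, real_inner_self_eq_norm_sq, hlen k, hexp4]
      rw [Finset.sum_congr rfl this, Finset.sum_const, hsize i, nsmul_eq_mul]
    have h2 : (∑ k ∈ Finset.univ.filter (fun k : Fin n => ¬ blk k = blk i),
        Real.exp ((inner ℝ (v i) (v k) : ℝ))) ≤ (n:ℝ) ^ 2 := by
      calc (∑ k ∈ Finset.univ.filter (fun k : Fin n => ¬ blk k = blk i),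
          Real.exp ((inner ℝ (v i) (v k) : ℝ)))
          ≤ ∑ _k ∈ Finset.univ.filter (fun k : Fin n => ¬ blk k = blk i), (n:ℝ) := by
            apply Finset.sum_le_sum
            intro k hk
            simp only [Finset.mem_filter] at hk
            calc Real.exp ((inner ℝ (v i) (v k) : ℝ))
                ≤ Real.exp (Real.log n) :=
                  Real.exp_le_exp.mpr (hcross i k (fun h => hk.2 h.symm))
              _ = (n:ℝ) := hexp1
        _ = ((Finset.univ.filter (fun k : Fin n => ¬ blk k = blk i)).card : ℝ) * n := by
            rw [Finset.sum_const, nsmul_eq_mul]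
        _ ≤ (n:ℝ) * n := by
            apply mul_le_mul_of_nonneg_right _ hn0.le
            have := Finset.card_filter_le Finset.univ (fun k : Fin n => ¬ blk k = blk i)
            simp only [Finset.card_univ, Fintype.card_fin] at this
            exact_mod_cast this
        _ = (n:ℝ) ^ 2 := by ring
    linarith
  constructor
  · have : nsm v i j = (n:ℝ) ^ 4 / S := by rw [nsm, hnum]
    rw [this]
    exact div_le_div_of_nonneg_left (by positivity) hSpos hSle
  · rw [div_le_div_iff₀ (by positivity) (by positivity)]
    have h24 : (n:ℝ) ^ 2 ≤ (n:ℝ) ^ 4 := pow_le_pow_right₀ hn1 (by norm_num)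
    nlinarith [h24, mul_le_mul_of_nonneg_right (show (1:ℝ) ≤ b from by exact_mod_cast hb) (pow_nonneg hn0.le 4)]
end

section
/- Let M be an n×n row-substochastic nonnegative matrix (each row sums to at most 1) admitting n/b disjoint blocks of size b with all within-block entries at least 1/(2b). Then M has at least (n/b)·b·(b−1)/2 = n(b−1)/2 potential community pairs at threshold ε = 1/(2b). In particular, if b ≥ 2, M has at least n/2 potential community pairs, which for ε = 1/(2b) and d < n(b−1)ε² is strictly more than the d/(2ε²) bound achievable by any Gram matrix V^T V with row sums bounded by 1 and V ∈ R^{d×n}. -/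
open Finset

/-- A substochastic matrix with block community structure has many potential
community pairs at threshold `ε = 1/(2b)` — more than any low-rank Gram matrix allows. -/
theorem block_matrix_many_community_pairs
    (n b : ℕ) (hb1 : 1 ≤ b) (hdvd : b ∣ n)
    (M : Matrix (Fin n) (Fin n) ℝ)
    (hnonneg : ∀ i j, 0 ≤ M i j) (hrow : ∀ i, ∑ j, M i j ≤ 1)
    (blk : Fin n → ℕ)
    (hsize : ∀ i : Fin n, (Finset.univ.filter (fun j : Fin n => blk j = blk i)).card = b)
    (hblock : ∀ i j : Fin n, blk i = blk j → 1 / (2 * (b : ℝ)) ≤ M i j) :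
    ((n : ℝ) * (b - 1) / 2 ≤
        ((Finset.univ.filter (fun p : Fin n × Fin n =>
          p.1 < p.2 ∧ 1 / (2 * (b : ℝ)) ≤ M p.1 p.2 ∧ 1 / (2 * (b : ℝ)) ≤ M p.2 p.1)).card : ℝ)) ∧
      (2 ≤ b → (n : ℝ) / 2 ≤
        ((Finset.univ.filter (fun p : Fin n × Fin n =>
          p.1 < p.2 ∧ 1 / (2 * (b : ℝ)) ≤ M p.1 p.2 ∧ 1 / (2 * (b : ℝ)) ≤ M p.2 p.1)).card : ℝ)) ∧
      (∀ d : ℕ, (d : ℝ) < (n : ℝ) * (b - 1) * (1 / (2 * (b : ℝ))) ^ 2 →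
        (d : ℝ) / (2 * (1 / (2 * (b : ℝ))) ^ 2) <
        ((Finset.univ.filter (fun p : Fin n × Fin n =>
          p.1 < p.2 ∧ 1 / (2 * (b : ℝ)) ≤ M p.1 p.2 ∧ 1 / (2 * (b : ℝ)) ≤ M p.2 p.1)).card : ℝ)) := by
  set S := Finset.univ.filter (fun p : Fin n × Fin n =>
          p.1 < p.2 ∧ 1 / (2 * (b : ℝ)) ≤ M p.1 p.2 ∧ 1 / (2 * (b : ℝ)) ≤ M p.2 p.1) with hS
  set T := Finset.univ.filter (fun p : Fin n × Fin n => p.1 < p.2 ∧ blk p.1 = blk p.2) with hT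
  set T' := Finset.univ.filter (fun p : Fin n × Fin n => p.2 < p.1 ∧ blk p.1 = blk p.2) with hT'
  set U := Finset.univ.filter (fun p : Fin n × Fin n => p.1 ≠ p.2 ∧ blk p.1 = blk p.2) with hU
  have hTS : T ⊆ S := by
    intro p hp
    simp only [hT, hS, mem_filter, mem_univ, true_and] at hp ⊢
    exact ⟨hp.1, hblock _ _ hp.2, hblock _ _ hp.2.symm⟩
  have hUcard : U.card = n * (b - 1) := by
    have : U.card = ∑ i : Fin n, (Finset.univ.filter (fun j : Fin n => i ≠ j ∧ blk i = blk j)).card := by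
      simp only [hU, Finset.card_filter, Fintype.sum_prod_type]
    rw [this]
    have hinner : ∀ i : Fin n,
        (Finset.univ.filter (fun j : Fin n => i ≠ j ∧ blk i = blk j)).card = b - 1 := by
      intro i
      have he : Finset.univ.filter (fun j : Fin n => i ≠ j ∧ blk i = blk j)
          = (Finset.univ.filter (fun j : Fin n => blk j = blk i)).erase i := by
        ext j
        simp only [mem_filter, mem_erase, mem_univ, true_and]
        constructor
        · rintro ⟨h1, h2⟩; exact ⟨Ne.symm h1, h2.symm⟩
        · rintro ⟨h1, h2⟩; exact ⟨Ne.symm h1, h2.symm⟩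
      rw [he, Finset.card_erase_of_mem (by simp), hsize]
    simp [hinner, Finset.card_univ]
  have hdisj : Disjoint T T' := by
    rw [Finset.disjoint_left]
    intro p hp hp'
    simp only [hT, hT', mem_filter] at hp hp'
    exact absurd hp'.2.1 (not_lt.2 hp.2.1.le)
  have hUnion : T ∪ T' = U := by
    ext p
    simp only [hT, hT', hU, mem_union, mem_filter, mem_univ, true_and]
    constructor
    · rintro (⟨h, h2⟩ | ⟨h, h2⟩)
      exacts [⟨ne_of_lt h, h2⟩, ⟨(ne_of_lt h).symm, h2⟩]
    · rintro ⟨h, h2⟩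
      rcases lt_or_gt_of_ne h with hlt | hlt
      · exact Or.inl ⟨hlt, h2⟩
      · exact Or.inr ⟨hlt, h2⟩
  have hTT' : T'.card = T.card := by
    apply Finset.card_bij (fun p _ => Prod.swap p)
    · intro p hp
      simp only [hT, hT', mem_filter, mem_univ, true_and, Prod.fst_swap, Prod.snd_swap] at hp ⊢
      exact ⟨hp.1, hp.2.symm⟩
    · intro p _ q _ h
      exact Prod.swap_injective h
    · intro p hp
      refine ⟨Prod.swap p, ?_, by simp⟩
      simp only [hT, hT', mem_filter, mem_univ, true_and, Prod.fst_swap, Prod.snd_swap] at hp ⊢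
      exact ⟨hp.1, hp.2.symm⟩
  have h2T : 2 * T.card = n * (b - 1) := by
    have := Finset.card_union_of_disjoint hdisj
    rw [hUnion, hUcard] at this
    omega
  have hTreal : (T.card : ℝ) = (n : ℝ) * ((b : ℝ) - 1) / 2 := by
    have : (2 * T.card : ℝ) = (n : ℝ) * ((b : ℝ) - 1) := by
      have := congrArg (fun k : ℕ => (k : ℝ)) h2T
      push_cast at this
      rw [this]
      have : ((b - 1 : ℕ) : ℝ) = (b : ℝ) - 1 := by
        push_cast [hb1]; ring
      rw [this]
    linarith
  have hmain : (n : ℝ) * ((b : ℝ) - 1) / 2 ≤ (S.card : ℝ) := by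
    rw [← hTreal]
    exact_mod_cast Finset.card_le_card hTS
  refine ⟨hmain, ?_, ?_⟩
  · intro hb2
    have hn : (0 : ℝ) ≤ (n : ℝ) := Nat.cast_nonneg n
    have : (n : ℝ) / 2 ≤ (n : ℝ) * ((b : ℝ) - 1) / 2 := by
      have : (1 : ℝ) ≤ (b : ℝ) - 1 := by
        have : (2 : ℝ) ≤ (b : ℝ) := by exact_mod_cast hb2
        linarith
      nlinarith
    linarith
  · intro d hd
    have hε : (0 : ℝ) < (1 / (2 * (b : ℝ))) ^ 2 := by
      have hb : (0 : ℝ) < (b : ℝ) := by exact_mod_cast hb1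
      positivity
    rw [div_lt_iff₀ (by positivity)]
    have : (d : ℝ) < (n : ℝ) * ((b : ℝ) - 1) * (1 / (2 * (b : ℝ))) ^ 2 := hd
    nlinarith [hmain, hε]
end
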